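/- Let μ and μ̃ (the reflected measure μ̃(g) = μ(g^{-1})) generate random walks v_n, w_n on a group G acting on a δ-hyperbolic space, and suppose: (a) there are constants K₆, K₇ and c₁ < 1 such that μ^{*n}(S_1(x, r)) ≤ K₇ c₁^r and μ̃^{*n}(S_1(x,r)) ≤ K₇ c₁^r for all n, r, and all x with d(1,x) ≥ K₆; (b) there are L > 0 and c₂ < 1 with P(d(1, w_n) ≤ Ln) ≤ O(c₂^n). Then there exist constants such that (μ^{*n} × μ̃^{*n})(S_1(Δ, r)) ≤ O(c₁^r) + O(c₂^n) for all n and r, where Δ is the diagonal in Ḡ × Ḡ. -/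
import Mathlib


open MeasureTheory

/-- If the measures `P n = μ^{*n}` and `Q n = μ̃^{*n}` of shadows decay exponentially in the
shadow parameter (uniformly over shadows with center at distance at least `K₆` from the
basepoint), and the `Q`-walk makes linear progress, then the product measures of shadows of
the diagonal satisfy `(μ^{*n} × μ̃^{*n})(S_1(Δ, r)) ≤ O(c₁^r) + O(c₂^n)`. -/
theorem product_measure_diagonal_shadow_bound
    {G : Type*} [Group G] [Countable G] [MeasurableSpace G] [MeasurableSingletonClass G]
    (d : G → G → ℝ) (gp : G → G → ℝ) (δ : ℝ)
    (hgp_symm : ∀ x y : G, gp x y = gp y x)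
    (hhyp : ∀ x y z : G, min (gp x z) (gp y z) - 2 * δ ≤ gp x y)
    (P Q : ℕ → Measure G)
    [∀ n, IsProbabilityMeasure (P n)] [∀ n, IsProbabilityMeasure (Q n)]
    (K₆ K₇ c₁ c₂ L : ℝ) (hc₁0 : 0 < c₁) (hc₁ : c₁ < 1) (hc₂0 : 0 < c₂) (hc₂ : c₂ < 1)
    (hL : 0 < L)
    (haP : ∀ (n : ℕ) (x : G) (r : ℝ), K₆ ≤ d 1 x →
      P n {y | r ≤ gp x y} ≤ ENNReal.ofReal (K₇ * c₁ ^ r))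
    (haQ : ∀ (n : ℕ) (x : G) (r : ℝ), K₆ ≤ d 1 x →
      Q n {y | r ≤ gp x y} ≤ ENNReal.ofReal (K₇ * c₁ ^ r))
    (hb : ∃ C₂ : ℝ, ∀ n : ℕ, Q n {x | d 1 x ≤ L * n} ≤ ENNReal.ofReal (C₂ * c₂ ^ n)) :
    ∃ C : ℝ, ∀ (n : ℕ) (r : ℝ),
      ((P n).prod (Q n)) {p : G × G | ∃ x : G, r ≤ gp x p.1 ∧ r ≤ gp x p.2}
        ≤ ENNReal.ofReal (C * c₁ ^ r) + ENNReal.ofReal (C * c₂ ^ n) := by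
  obtain ⟨C₂, hC₂⟩ := hb
  obtain ⟨N, hN⟩ := exists_nat_ge (K₆ / L)
  have measG : ∀ s : Set G, MeasurableSet s := fun s => s.to_countable.measurableSet
  have measGG : ∀ s : Set (G × G), MeasurableSet s := fun s => s.to_countable.measurableSet
  refine ⟨max (max (K₇ * c₁ ^ (-(2 * δ))) C₂) ((c₂ ^ N)⁻¹), fun n r => ?_⟩
  set C : ℝ := max (max (K₇ * c₁ ^ (-(2 * δ))) C₂) ((c₂ ^ N)⁻¹) with hC
  by_cases hn : n < N
  · -- small n: bound the whole measure by 1 ≤ C * c₂ ^ n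
    have h1 : ((P n).prod (Q n)) {p : G × G | ∃ x : G, r ≤ gp x p.1 ∧ r ≤ gp x p.2} ≤ 1 :=
      prob_le_one
    have h2 : (1 : ENNReal) ≤ ENNReal.ofReal (C * c₂ ^ n) := by
      rw [ENNReal.one_le_ofReal]
      have hpow : c₂ ^ N ≤ c₂ ^ n :=
        pow_le_pow_of_le_one hc₂0.le hc₂.le hn.le
      have hCN : (c₂ ^ N)⁻¹ ≤ C := le_max_right _ _
      calc (1 : ℝ) = (c₂ ^ N)⁻¹ * c₂ ^ N := by
            field_simp
        _ ≤ (c₂ ^ N)⁻¹ * c₂ ^ n :=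
            mul_le_mul_of_nonneg_left hpow (inv_nonneg.mpr (pow_nonneg hc₂0.le N))
        _ ≤ C * c₂ ^ n :=
            mul_le_mul_of_nonneg_right hCN (pow_nonneg hc₂0.le n)
    calc ((P n).prod (Q n)) {p : G × G | ∃ x : G, r ≤ gp x p.1 ∧ r ≤ gp x p.2} ≤ 1 := h1
      _ ≤ ENNReal.ofReal (C * c₂ ^ n) := h2
      _ ≤ ENNReal.ofReal (C * c₁ ^ r) + ENNReal.ofReal (C * c₂ ^ n) := le_add_self
  · push_neg at hn
    have hK₆ : K₆ ≤ L * n := by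
      have : K₆ / L ≤ (n : ℝ) := hN.trans (by exact_mod_cast hn)
      calc K₆ = (K₆ / L) * L := by field_simp
        _ ≤ (n : ℝ) * L := by gcongr
        _ = L * n := mul_comm _ _
    -- containment into two pieces
    set T : Set (G × G) := {p | r - 2 * δ ≤ gp p.2 p.1 ∧ L * n < d 1 p.2}
    set B : Set G := {x | d 1 x ≤ L * n}
    have hsub : {p : G × G | ∃ x : G, r ≤ gp x p.1 ∧ r ≤ gp x p.2} ⊆
        T ∪ (Set.univ ×ˢ B) := by
      rintro ⟨v, w⟩ ⟨x, h1, h2⟩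
      by_cases hw : d 1 w ≤ L * n
      · exact Or.inr ⟨trivial, hw⟩
      · refine Or.inl ⟨?_, lt_of_not_ge hw⟩
        have := hhyp w v x
        have hmin : r ≤ min (gp w x) (gp v x) := by
          rw [le_min_iff, hgp_symm w x, hgp_symm v x]
          exact ⟨h2, h1⟩
        linarith [this]
    have hT : ((P n).prod (Q n)) T ≤ ENNReal.ofReal (K₇ * c₁ ^ (r - 2 * δ)) := by
      rw [Measure.prod_apply_symm (measGG T)]
      have hpt : ∀ w : G, P n ((fun v => (v, w)) ⁻¹' T)
          ≤ ENNReal.ofReal (K₇ * c₁ ^ (r - 2 * δ)) := by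
        intro w
        by_cases hw : L * n < d 1 w
        · have hsub2 : ((fun v => (v, w)) ⁻¹' T) ⊆ {y | r - 2 * δ ≤ gp w y} := by
            intro v hv; exact hv.1
          exact le_trans (measure_mono hsub2) (haP n w (r - 2 * δ) (hK₆.trans hw.le))
        · have : ((fun v => (v, w)) ⁻¹' T) = ∅ := by
            ext v; simp only [Set.mem_preimage, Set.mem_empty_iff_false, iff_false]
            intro hv; exact hw hv.2
          simp [this]
      calc ∫⁻ w, P n ((fun v => (v, w)) ⁻¹' T) ∂(Q n)
          ≤ ∫⁻ _, ENNReal.ofReal (K₇ * c₁ ^ (r - 2 * δ)) ∂(Q n) := lintegral_mono hpt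
        _ = ENNReal.ofReal (K₇ * c₁ ^ (r - 2 * δ)) := by
            simp [lintegral_const]
    have hB : ((P n).prod (Q n)) (Set.univ ×ˢ B) ≤ ENNReal.ofReal (C₂ * c₂ ^ n) := by
      rw [Measure.prod_prod]
      simp only [measure_univ, one_mul]
      exact hC₂ n
    have hbound1 : K₇ * c₁ ^ (r - 2 * δ) ≤ C * c₁ ^ r := by
      have : c₁ ^ (r - 2 * δ) = c₁ ^ r * c₁ ^ (-(2 * δ)) := by
        rw [← Real.rpow_add hc₁0]; ring_nf
      rw [this, ← mul_assoc, mul_comm K₇ (c₁ ^ r), mul_assoc, mul_comm (c₁ ^ r)]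
      exact mul_le_mul_of_nonneg_right (le_trans (le_max_left _ _) (le_max_left _ _))
        (Real.rpow_pos_of_pos hc₁0 r).le
    have hbound2 : C₂ * c₂ ^ n ≤ C * c₂ ^ n := by
      exact mul_le_mul_of_nonneg_right (le_trans (le_max_right _ _) (le_max_left _ _))
        (pow_nonneg hc₂0.le n)
    calc ((P n).prod (Q n)) {p : G × G | ∃ x : G, r ≤ gp x p.1 ∧ r ≤ gp x p.2}
        ≤ ((P n).prod (Q n)) (T ∪ (Set.univ ×ˢ B)) := measure_mono hsub
      _ ≤ ((P n).prod (Q n)) T + ((P n).prod (Q n)) (Set.univ ×ˢ B) := measure_union_le _ _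
      _ ≤ ENNReal.ofReal (K₇ * c₁ ^ (r - 2 * δ)) + ENNReal.ofReal (C₂ * c₂ ^ n) :=
          add_le_add hT hB
      _ ≤ ENNReal.ofReal (C * c₁ ^ r) + ENNReal.ofReal (C * c₂ ^ n) :=
          add_le_add (ENNReal.ofReal_le_ofReal hbound1) (ENNReal.ofReal_le_ofReal hbound2)
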